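/- Let C ≥ 2 and let μ_1,…,μ_C ∈ ℝ^d form a centered simplex ETF with radius R, where 0 < R ≤ 1, and let K = R·√(2C/(C−1)) denote the common pairwise distance. Let 0 ≤ ε < K/2. Suppose x ∈ ℝ^d satisfies ‖x‖ = 1, ‖x − μ_{c*}‖ ≤ ε for some index c*, and x − μ_{c*} ∈ span(μ_1,…,μ_C). Then for every z ∈ ℝ^d with ‖z‖ = 1 one has Var_c[‖x − μ_c‖²] ≥ Var_c[‖z − μ_c‖²], with equality if and only if z ∈ span(μ_1,…,μ_C). -/

import Mathlib

open scoped RealInnerProductSpace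
open Finset

/-- Variance of a finite family of reals indexed by `Fin C`. -/
noncomputable def varFam {C : ℕ} (a : Fin C → ℝ) : ℝ :=
  (1 / (C : ℝ)) * ∑ c, (a c - (1 / (C : ℝ)) * ∑ c', a c') ^ 2

set_option maxHeartbeats 1000000 in
theorem id_variance_dominates_under_subspace_alignment {d C : ℕ} (hC : 2 ≤ C)
    (R K ε : ℝ) (hR0 : 0 < R) (hR1 : R ≤ 1)
    (μ : Fin C → EuclideanSpace ℝ (Fin d))
    (hnorm : ∀ c, ‖μ c‖ = R)
    (hangle : ∀ c c', c ≠ c' → ⟪μ c, μ c'⟫ = -R ^ 2 / ((C : ℝ) - 1))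
    (hsum : ∑ c, μ c = 0)
    (hK : K = R * Real.sqrt (2 * C / ((C : ℝ) - 1)))
    (hε0 : 0 ≤ ε) (hε : ε < K / 2)
    (x : EuclideanSpace ℝ (Fin d)) (hxnorm : ‖x‖ = 1)
    (cstar : Fin C) (hx : ‖x - μ cstar‖ ≤ ε)
    (hspan : x - μ cstar ∈ Submodule.span ℝ (Set.range μ))
    (z : EuclideanSpace ℝ (Fin d)) (hznorm : ‖z‖ = 1) :
    varFam (fun c => ‖z - μ c‖ ^ 2) ≤ varFam (fun c => ‖x - μ c‖ ^ 2) ∧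
    (varFam (fun c => ‖x - μ c‖ ^ 2) = varFam (fun c => ‖z - μ c‖ ^ 2) ↔
      z ∈ Submodule.span ℝ (Set.range μ)) := by
  have hCpos : (0 : ℝ) < C := by positivity
  have hC1 : (0 : ℝ) < (C : ℝ) - 1 := by
    have : (2 : ℝ) ≤ C := by exact_mod_cast hC
    linarith
  set V := Submodule.span ℝ (Set.range μ) with hV
  set lam : ℝ := R ^ 2 * C / ((C : ℝ) - 1) with hlamdef
  have hlam : 0 < lam := by positivity
  -- key operator identity on V
  have key : ∀ v ∈ V, ∑ c, ⟪μ c, v⟫ • μ c = lam • v := by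
    intro v hv
    induction hv using Submodule.span_induction with
    | mem w hw =>
        obtain ⟨c', rfl⟩ := hw
        have hterm : ∀ c, ⟪μ c, μ c'⟫ • μ c =
            (-R ^ 2 / ((C : ℝ) - 1)) • μ c +
              (if c = c' then (R ^ 2 + R ^ 2 / ((C : ℝ) - 1)) • μ c' else 0) := by
          intro c
          by_cases h : c = c'
          · subst h
            have : ⟪μ c, μ c⟫ = R ^ 2 := by
              rw [real_inner_self_eq_norm_sq, hnorm]
            rw [this, if_pos rfl, ← add_smul]
            congr 1
            field_simp
            ring
          · rw [hangle c c' h]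
            simp [h]
        calc ∑ c, ⟪μ c, μ c'⟫ • μ c
            = ∑ c, ((-R ^ 2 / ((C : ℝ) - 1)) • μ c +
                (if c = c' then (R ^ 2 + R ^ 2 / ((C : ℝ) - 1)) • μ c' else 0)) := by
              exact Finset.sum_congr rfl fun c _ => hterm c
          _ = (-R ^ 2 / ((C : ℝ) - 1)) • (∑ c, μ c) +
                (R ^ 2 + R ^ 2 / ((C : ℝ) - 1)) • μ c' := by
              rw [Finset.sum_add_distrib, ← Finset.smul_sum, Finset.sum_ite_eq']
              simp
          _ = lam • μ c' := by
              rw [hsum, smul_zero, zero_add]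
              congr 1
              rw [hlamdef]
              field_simp
              ring
    | zero => simp
    | add u w _ _ hu hw =>
        simp only [inner_add_right, add_smul, Finset.sum_add_distrib, hu, hw, smul_add]
    | smul a u _ hu =>
        simp only [inner_smul_right, mul_smul, ← Finset.smul_sum, hu, smul_comm a lam]
  -- quadratic form formula
  have Qform : ∀ w : EuclideanSpace ℝ (Fin d),
      ∑ c, ⟪μ c, w⟫ ^ 2 = lam * ‖(V.orthogonalProjectionOnto w : EuclideanSpace ℝ (Fin d))‖ ^ 2 := by
    intro w
    set pw : EuclideanSpace ℝ (Fin d) := (V.orthogonalProjectionOnto w : EuclideanSpace ℝ (Fin d)) with hpw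
    have h1 : ∀ c, ⟪μ c, w⟫ = ⟪μ c, pw⟫ := by
      intro c
      have h0 := Submodule.starProjection_inner_eq_zero (K := V) w (μ c)
        (show μ c ∈ V from Submodule.subset_span (Set.mem_range_self c))
      rw [inner_sub_left, Submodule.starProjection_apply, ← hpw] at h0
      have e1 := real_inner_comm w (μ c)
      have e2 := real_inner_comm pw (μ c)
      linarith
    calc ∑ c, ⟪μ c, w⟫ ^ 2 = ∑ c, ⟪μ c, pw⟫ * ⟪μ c, pw⟫ := by
          simp only [h1, sq]
      _ = ⟪∑ c, ⟪μ c, pw⟫ • μ c, pw⟫ := by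
          rw [sum_inner]
          exact Finset.sum_congr rfl fun c _ => (real_inner_smul_left _ _ _).symm
      _ = ⟪lam • pw, pw⟫ := by
          rw [key pw (V.orthogonalProjectionOnto w).2]
      _ = lam * ‖pw‖ ^ 2 := by
          rw [real_inner_smul_left, real_inner_self_eq_norm_sq]
  -- variance formula for unit vectors
  have varform : ∀ w : EuclideanSpace ℝ (Fin d), ‖w‖ = 1 →
      varFam (fun c => ‖w - μ c‖ ^ 2) = (4 / C) * ∑ c, ⟪μ c, w⟫ ^ 2 := by
    intro w hw
    have ha : ∀ c, ‖w - μ c‖ ^ 2 = 1 + R ^ 2 - 2 * ⟪μ c, w⟫ := by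
      intro c
      rw [norm_sub_sq_real, hw, hnorm, real_inner_comm]
      ring
    have hsum' : ∑ c, ⟪μ c, w⟫ = 0 := by
      rw [← sum_inner, hsum, inner_zero_left]
    have hmean : (1 / (C : ℝ)) * ∑ c', ‖w - μ c'‖ ^ 2 = 1 + R ^ 2 := by
      simp only [ha]
      rw [Finset.sum_sub_distrib, ← Finset.mul_sum, hsum', mul_zero, sub_zero,
        Finset.sum_const, Finset.card_univ, Fintype.card_fin, nsmul_eq_mul]
      field_simp
    unfold varFam
    simp only
    rw [hmean]
    have hterm : ∀ c, (‖w - μ c‖ ^ 2 - (1 + R ^ 2)) ^ 2 = 4 * ⟪μ c, w⟫ ^ 2 := by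
      intro c
      rw [ha]
      ring
    rw [Finset.sum_congr rfl fun c _ => hterm c, ← Finset.mul_sum]
    ring
  -- x lies in V
  have hxV : x ∈ V := by
    have h1 : μ cstar ∈ V := Submodule.subset_span (Set.mem_range_self cstar)
    have := Submodule.add_mem V h1 hspan
    simpa using this
  have hPx : (V.orthogonalProjectionOnto x : EuclideanSpace ℝ (Fin d)) = x :=
    Submodule.starProjection_eq_self_iff.mpr hxV
  set pz : EuclideanSpace ℝ (Fin d) := (V.orthogonalProjectionOnto z : EuclideanSpace ℝ (Fin d)) with hpz
  -- Pythagoras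
  have horth : ⟪pz, z - pz⟫ = 0 := by
    have h0 := Submodule.starProjection_inner_eq_zero (K := V) z pz (V.orthogonalProjectionOnto z).2
    rw [real_inner_comm]
    exact h0
  have hpyth : ‖pz‖ ^ 2 + ‖z - pz‖ ^ 2 = 1 := by
    have hdecomp : pz + (z - pz) = z := by abel
    have h2 : ‖z‖ ^ 2 = ‖pz + (z - pz)‖ ^ 2 := by rw [hdecomp]
    rw [norm_add_sq_real, horth] at h2
    rw [hznorm] at h2
    nlinarith [h2]
  have hvx : varFam (fun c => ‖x - μ c‖ ^ 2) = (4 / C) * lam := by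
    rw [varform x hxnorm, Qform x, hPx, hxnorm]
    ring
  have hvz : varFam (fun c => ‖z - μ c‖ ^ 2) = (4 / C) * (lam * ‖pz‖ ^ 2) := by
    rw [varform z hznorm, Qform z]
  have hpzle : ‖pz‖ ^ 2 ≤ 1 := by nlinarith [sq_nonneg ‖z - pz‖]
  have hfac : 0 < (4 / (C : ℝ)) * lam := by positivity
  have h4C : (0:ℝ) < 4 / (C : ℝ) := by positivity
  constructor
  · rw [hvx, hvz]
    have h1 : lam * ‖pz‖ ^ 2 ≤ lam := by nlinarith
    exact mul_le_mul_of_nonneg_left h1 h4C.le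
  · rw [hvx, hvz]
    constructor
    · intro heq
      have hnorm1 : ‖pz‖ ^ 2 = 1 := by
        have h1 : lam = lam * ‖pz‖ ^ 2 := mul_left_cancel₀ (ne_of_gt h4C) heq
        have h2 : lam * ‖pz‖ ^ 2 = lam * 1 := by rw [mul_one]; linarith
        have h3 := mul_left_cancel₀ (ne_of_gt hlam) h2
        linarith
      have hz0 : ‖z - pz‖ ^ 2 = 0 := by linarith
      have : z - pz = 0 := by
        have := sq_eq_zero_iff.mp hz0
        exact norm_eq_zero.mp this
      have hzeq : z = pz := by
        have := sub_eq_zero.mp this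
        exact this
      rw [hzeq]
      exact (V.orthogonalProjectionOnto z).2
    · intro hzV
      have : pz = z := Submodule.starProjection_eq_self_iff.mpr hzV
      rw [this, hznorm]
      ring
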